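/- Two providers a, b occupy points x, y respectively with skills satisfying s_{a,y} > s_{a,x}, s_{a,y} > s_{b,y}, s_{b,x} > s_{b,y}, s_{b,x} > s_{a,x}. Suppose the optimal matching allocates total affinity A > 0 to each of x and y, with user utility equal to (allocated affinity)·(skill of the serving provider). Then: (i) the swapped configuration (a at y, b at x) yields strictly greater social welfare A·(s_{a,y} + s_{b,x}) > A·(s_{a,x} + s_{b,y}) than the current configuration; (ii) any sequence of single-provider moves from the current to the swapped configuration must pass through an intermediate configuration in which both providers occupy the same point, whose social welfare is at most A·max(s_{a,y}, s_{b,x}, s_{a,x}, s_{b,y}) + A·(second provider's skill at the shared point) and is strictly less than the swapped configuration's welfare whenever the shared-point skills are strictly smaller than s_{a,y} and s_{b,x} respectively. -/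
import Mathlib


/-- Two-provider swap counterexample: the swapped configuration strictly improves
welfare, but any single-provider-at-a-time move sequence passes through a shared
location, whose welfare is bounded and strictly worse than the swapped welfare. -/
theorem stmt13 (A say sax sby sbx : ℝ) (hA : 0 < A)
    (h1 : say > sax) (h2 : say > sby) (h3 : sbx > sby) (h4 : sbx > sax)
    (skill : Fin 2 → Bool → ℝ)
    (hskax : skill 0 false = sax) (hskay : skill 0 true = say)
    (hskbx : skill 1 false = sbx) (hskby : skill 1 true = sby) :
    (A * (say + sbx) > A * (sax + sby)) ∧
    (∀ (n : ℕ) (c : ℕ → Fin 2 → Bool),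
      (c 0 0 = false ∧ c 0 1 = true) →
      (c n 0 = true ∧ c n 1 = false) →
      (∀ t < n, (c (t+1) 0 = c t 0 ∧ c (t+1) 1 ≠ c t 1) ∨
                (c (t+1) 0 ≠ c t 0 ∧ c (t+1) 1 = c t 1)) →
      ∃ t ≤ n, c t 0 = c t 1) ∧
    (∀ z : Bool, A * (skill 0 z + skill 1 z) ≤
      A * max (max say sbx) (max sax sby) + A * skill 1 z) ∧
    (∀ z : Bool, skill 0 z < say → skill 1 z < sbx →
      A * (skill 0 z + skill 1 z) < A * (say + sbx)) := by
  refine ⟨by nlinarith, ?_, ?_, ?_⟩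
  · intro n c h0 hn hstep
    cases n with
    | zero => simp [h0.1] at hn
    | succ m =>
      rcases hstep 0 (Nat.succ_pos m) with ⟨ha, hb⟩ | ⟨ha, hb⟩
      · refine ⟨1, by omega, ?_⟩
        rw [ha, h0.1]
        rcases Bool.eq_false_or_eq_true (c 1 1) with h | h
        · exact absurd (h.trans h0.2.symm) hb
        · exact h.symm
      · refine ⟨1, by omega, ?_⟩
        rw [hb, h0.2]
        rcases Bool.eq_false_or_eq_true (c 1 0) with h | h
        · exact h
        · exact absurd (h.trans h0.1.symm) ha
  · intro z
    have h : skill 0 z ≤ max (max say sbx) (max sax sby) := by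
      cases z
      · rw [hskax]; exact le_trans (le_max_left _ _) (le_max_right _ _)
      · rw [hskay]; exact le_trans (le_max_left _ _) (le_max_left _ _)
    nlinarith
  · intro z h5 h6
    nlinarith
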